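/- Let D ⊆ ℝ be an interval, 0 < T ≤ ∞, and let f, g : [0,T) × D → ℝ be continuous functions such that f(t,w) ≤ g(t,u) whenever w ≤ u, for t ∈ (0,T) and w,u ∈ D. Assume the Cauchy problem u̇(t) = g(t,u(t)), u(0) = u₀ ∈ D, has a unique solution. If w is a differentiable function with ẇ(t) ≤ f(t,w(t)) and w(0) = w₀ ≤ u₀, w₀ ∈ D, then u(t) ≥ w(t) for all t at which both u(t) and w(t) are defined. -/

import Mathlib

open Set Filter Metric MeasureTheory intervalIntegral

section Helpers

/-- Lipschitz lower approximation of a continuous bounded function on a compact set. -/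
lemma comparison_lipschitz_approx (H : ℝ × ℝ → ℝ) (Q : Set (ℝ × ℝ)) (hQ : IsCompact Q)
    (hH : Continuous H) (M : ℝ) (hM : ∀ p, |H p| ≤ M) (hM0 : 0 ≤ M)
    (β : ℝ) (hβ : 0 < β) (hQne : Q.Nonempty) :
    ∃ G : ℝ × ℝ → ℝ, (∃ L : NNReal, LipschitzWith L G) ∧ (∀ p, |G p| ≤ M + β) ∧
      (∀ p ∈ Q, H p - 2*β ≤ G p ∧ G p ≤ H p - β) := by
  have huc := (hQ.uniformContinuousOn_of_continuous hH.continuousOn)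
  rw [Metric.uniformContinuousOn_iff] at huc
  obtain ⟨δ, hδ0, hδ⟩ := huc β hβ
  set L : ℝ := 2 * M / δ + 1 with hLdef
  have hL0 : 0 < L := by positivity
  set F : ℝ × ℝ → ℝ := fun p => sInf ((fun q => H q + L * dist p q) '' Q) with hFdef
  have hbdd : ∀ p : ℝ × ℝ, ∀ y ∈ (fun q => H q + L * dist p q) '' Q, -M ≤ y := by
    rintro p y ⟨q, hq, rfl⟩
    have h1 : -M ≤ H q := neg_le_of_abs_le (hM q)
    dsimp only
    nlinarith [dist_nonneg (x := p) (y := q)]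
  have hbddB : ∀ p : ℝ × ℝ, BddBelow ((fun q => H q + L * dist p q) '' Q) :=
    fun p => ⟨-M, fun y hy => hbdd p y hy⟩
  have hneI : ∀ p : ℝ × ℝ, ((fun q => H q + L * dist p q) '' Q).Nonempty :=
    fun p => hQne.image _
  have hFle : ∀ p ∈ Q, F p ≤ H p := by
    intro p hp
    have : H p + L * dist p p ∈ (fun q => H q + L * dist p q) '' Q := ⟨p, hp, rfl⟩
    simpa using csInf_le (hbddB p) this
  have hFge : ∀ p ∈ Q, H p - β ≤ F p := by
    intro p hp
    refine le_csInf (hneI p) ?_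
    rintro y ⟨q, hq, rfl⟩
    dsimp only
    rcases lt_or_ge (dist p q) δ with hlt | hge
    · have := hδ p hp q hq hlt
      rw [Real.dist_eq] at this
      have h2 : 0 ≤ L * dist p q := by positivity
      have := abs_lt.1 this
      linarith [this.1]
    · have h1 : -M ≤ H q := neg_le_of_abs_le (hM q)
      have h2 : H p ≤ M := le_of_abs_le (hM p)
      have h3 : L * δ ≤ L * dist p q := by
        apply mul_le_mul_of_nonneg_left hge hL0.le
      have h4 : 2 * M + δ ≤ L * δ := by
        rw [hLdef]; rw [add_mul, div_mul_cancel₀]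
        · linarith
        · exact ne_of_gt hδ0
      linarith
  have hFlip : ∀ p p' : ℝ × ℝ, F p ≤ F p' + L * dist p p' := by
    intro p p'
    rw [← sub_le_iff_le_add]
    refine le_csInf (hneI p') ?_
    rintro y ⟨q, hq, rfl⟩
    dsimp only
    have h1 : F p ≤ H q + L * dist p q := csInf_le (hbddB p) ⟨q, hq, rfl⟩
    have h2 : dist p q ≤ dist p p' + dist p' q := dist_triangle p p' q
    nlinarith
  have hFbelow : ∀ p, -M ≤ F p := fun p => le_csInf (hneI p) (fun y hy => hbdd p y hy)
  refine ⟨fun p => min (F p) M - β, ⟨⟨L, hL0.le⟩, ?_⟩, ?_, ?_⟩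
  · apply LipschitzWith.of_dist_le_mul
    intro p p'
    have l1 : F p ≤ F p' + L * dist p p' := hFlip p p'
    have l2 : F p' ≤ F p + L * dist p p' := by
      have := hFlip p' p
      rwa [dist_comm p' p] at this
    have haux : ∀ x y : ℝ, min x M - min y M ≤ |x - y| := by
      intro x y
      have h1 : min x M ≤ min (y + |x - y|) (M + |x - y|) :=
        min_le_min (by linarith [le_abs_self (x - y)]) (by linarith [abs_nonneg (x - y)])
      rw [min_add_add_right] at h1
      linarith
    have habs : |F p - F p'| ≤ L * dist p p' := abs_sub_le_iff.2 ⟨by linarith, by linarith⟩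
    have : dist (min (F p) M) (min (F p') M) ≤ L * dist p p' := by
      rw [Real.dist_eq]
      refine le_trans (abs_sub_le_iff.2 ⟨le_trans (haux _ _) ?_, le_trans (haux _ _) ?_⟩) le_rfl
      · exact le_trans (le_abs_self _) (by rwa [abs_abs])
      · rw [abs_sub_comm]
        exact le_trans (le_abs_self _) (by rwa [abs_abs])
    change dist (min (F p) M - β) (min (F p') M - β) ≤ L * dist p p'
    calc dist (min (F p) M - β) (min (F p') M - β)
        = dist (min (F p) M) (min (F p') M) := dist_sub_right _ _ _
      _ ≤ L * dist p p' := this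
  · intro p
    dsimp only
    have h1 : -M ≤ min (F p) M := le_min (hFbelow p) (by linarith)
    have h2 : min (F p) M ≤ M := min_le_right _ _
    rw [abs_le]; constructor <;> linarith
  · intro p hp
    dsimp only
    have h1 : H p - β ≤ F p := hFge p hp
    have h2 : F p ≤ H p := hFle p hp
    have h3 : H p ≤ M := le_of_abs_le (hM p)
    have h4 : H p - β ≤ min (F p) M := le_min h1 (by linarith)
    have h5 : min (F p) M ≤ H p := le_trans (min_le_left _ _) h2
    constructor <;> [linarith; linarith]

end Helpers

set_option maxHeartbeats 2000000 in
theorem comparison_lemma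
    (D : Set ℝ) (hD : D.OrdConnected) (T : EReal) (hT : 0 < T)
    (f g : ℝ → ℝ → ℝ)
    (hf : ContinuousOn (fun p : ℝ × ℝ => f p.1 p.2)
      ({t : ℝ | 0 ≤ t ∧ (t : EReal) < T} ×ˢ D))
    (hg : ContinuousOn (fun p : ℝ × ℝ => g p.1 p.2)
      ({t : ℝ | 0 ≤ t ∧ (t : EReal) < T} ×ˢ D))
    (hfg : ∀ t w u : ℝ, 0 < t → (t : EReal) < T → w ∈ D → u ∈ D → w ≤ u → f t w ≤ g t u)
    (u0 w0 : ℝ) (hu0 : u0 ∈ D) (hw0 : w0 ∈ D) (hw0u0 : w0 ≤ u0)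
    (Tu Tw : ℝ) (hTu : (Tu : EReal) ≤ T) (hTw : (Tw : EReal) ≤ T)
    (u : ℝ → ℝ) (hu_init : u 0 = u0)
    (hu_sol : ∀ t ∈ Ico (0 : ℝ) Tu, u t ∈ D ∧ HasDerivAt u (g t (u t)) t)
    (hu_uniq : ∀ (u' : ℝ → ℝ) (T' : ℝ), T' ≤ Tu → u' 0 = u0 →
      (∀ t ∈ Ico (0 : ℝ) T', u' t ∈ D ∧ HasDerivAt u' (g t (u' t)) t) →
      ∀ t ∈ Ico (0 : ℝ) T', u' t = u t)
    (w : ℝ → ℝ) (w' : ℝ → ℝ) (hw_init : w 0 = w0)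
    (hw_sol : ∀ t ∈ Ico (0 : ℝ) Tw,
      w t ∈ D ∧ HasDerivAt w (w' t) t ∧ w' t ≤ f t (w t)) :
    ∀ t ∈ Ico (0 : ℝ) (min Tu Tw), w t ≤ u t := by
  intro t₁ ht₁
  by_contra hcon
  push_neg at hcon
  obtain ⟨ht₁0, ht₁m⟩ := ht₁
  have ht₁u : t₁ < Tu := lt_of_lt_of_le ht₁m (min_le_left _ _)
  have ht₁w : t₁ < Tw := lt_of_lt_of_le ht₁m (min_le_right _ _)
  -- basic membership helpers
  have huIco : ∀ τ ∈ Icc (0:ℝ) t₁, τ ∈ Ico (0:ℝ) Tu :=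
    fun τ hτ => ⟨hτ.1, lt_of_le_of_lt hτ.2 ht₁u⟩
  have hwIco : ∀ τ ∈ Icc (0:ℝ) t₁, τ ∈ Ico (0:ℝ) Tw :=
    fun τ hτ => ⟨hτ.1, lt_of_le_of_lt hτ.2 ht₁w⟩
  have hucont : ContinuousOn u (Icc 0 t₁) := fun τ hτ =>
    ((hu_sol τ (huIco τ hτ)).2.differentiableAt.continuousAt).continuousWithinAt
  have hwcont : ContinuousOn w (Icc 0 t₁) := fun τ hτ =>
    ((hw_sol τ (hwIco τ hτ)).2.1.differentiableAt.continuousAt).continuousWithinAt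
  have hTlt : ∀ τ : ℝ, τ ≤ t₁ → (τ : EReal) < T :=
    fun τ h1 => lt_of_le_of_lt (EReal.coe_le_coe_iff.2 h1)
      (lt_of_lt_of_le (EReal.coe_lt_coe_iff.2 ht₁u) hTu)
  -- the last crossing point t₀
  set S : Set ℝ := {t ∈ Icc (0:ℝ) t₁ | w t ≤ u t} with hSdef
  have hScl : IsClosed S := by
    have : S = Icc (0:ℝ) t₁ ∩ (fun t => w t - u t) ⁻¹' (Iic 0) := by
      ext x; simp [hSdef, sub_nonpos, and_comm]
    rw [this]
    exact ContinuousOn.preimage_isClosed_of_isClosed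
      ((hwcont.sub hucont)) isClosed_Icc isClosed_Iic
  have h0S : (0:ℝ) ∈ S := ⟨⟨le_rfl, ht₁0⟩, by rw [hw_init, hu_init]; exact hw0u0⟩
  have hSbdd : BddAbove S := ⟨t₁, fun x hx => hx.1.2⟩
  set t₀ : ℝ := sSup S with ht₀def
  have ht₀S : t₀ ∈ S := hScl.csSup_mem ⟨0, h0S⟩ hSbdd
  have ht₀0 : 0 ≤ t₀ := ht₀S.1.1
  have ht₀t₁ : t₀ < t₁ :=
    lt_of_le_of_ne ht₀S.1.2 (fun h => absurd (h ▸ ht₀S.2) (not_le.2 hcon))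
  have hgt : ∀ τ : ℝ, t₀ < τ → τ ≤ t₁ → u τ < w τ := by
    intro τ h1 h2
    by_contra hc
    push_neg at hc
    exact absurd (le_csSup hSbdd ⟨⟨le_trans ht₀0 h1.le, h2⟩, hc⟩) (not_le.2 h1)
  have hwu₀ : w t₀ ≤ u t₀ := ht₀S.2
  -- the compact window [k₁, c]
  obtain ⟨τm, hτmJ, hτmin⟩ := isCompact_Icc.exists_isMinOn (α := ℝ) (s := Icc t₀ t₁)
    (nonempty_Icc.2 ht₀t₁.le) (hucont.mono (Icc_subset_Icc ht₀0 le_rfl))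
  obtain ⟨τM, hτMJ, hτmax⟩ := isCompact_Icc.exists_isMaxOn (α := ℝ) (s := Icc t₀ t₁)
    (nonempty_Icc.2 ht₀t₁.le) (hwcont.mono (Icc_subset_Icc ht₀0 le_rfl))
  set k₁ : ℝ := u τm with hk₁def
  set c : ℝ := w τM with hcdef
  have hJsub : Icc t₀ t₁ ⊆ Icc (0:ℝ) t₁ := Icc_subset_Icc ht₀0 le_rfl
  have humem : ∀ τ ∈ Icc t₀ t₁, u τ ∈ D := fun τ hτ => (hu_sol τ (huIco τ (hJsub hτ))).1
  have hwmem : ∀ τ ∈ Icc t₀ t₁, w τ ∈ D := fun τ hτ => (hw_sol τ (hwIco τ (hJsub hτ))).1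
  have hk₁D : k₁ ∈ D := humem τm hτmJ
  have hcD : c ∈ D := hwmem τM hτMJ
  have huk₁ : ∀ τ ∈ Icc t₀ t₁, k₁ ≤ u τ := fun τ hτ => hτmin hτ
  have hwc : ∀ τ ∈ Icc t₀ t₁, w τ ≤ c := fun τ hτ => hτmax hτ
  have ht₁J : t₁ ∈ Icc t₀ t₁ := ⟨ht₀t₁.le, le_rfl⟩
  have hk₁c : k₁ ≤ c := le_trans (huk₁ t₁ ht₁J) (le_trans hcon.le (hwc t₁ ht₁J))
  have hIccD : Icc k₁ c ⊆ D := hD.out hk₁D hcD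
  -- clamping and the reversed vector field H
  set cx : ℝ → ℝ := fun x => max k₁ (min x c) with hcxdef
  set ct : ℝ → ℝ := fun s => max 0 (min (t₁ - s) t₁) with hctdef
  have hcxmem : ∀ x, cx x ∈ Icc k₁ c := fun x =>
    ⟨le_max_left _ _, max_le hk₁c (min_le_right _ _)⟩
  have hctmem : ∀ s, ct s ∈ Icc (0:ℝ) t₁ := fun s =>
    ⟨le_max_left _ _, max_le ht₁0 (min_le_right _ _)⟩
  have hcxeq : ∀ x, k₁ ≤ x → x ≤ c → cx x = x := by
    intro x h1 h2; rw [hcxdef]; simp only [min_eq_left h2, max_eq_right h1]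
  have hcteq : ∀ s, 0 ≤ s → s ≤ t₁ → ct s = t₁ - s := by
    intro s h1 h2; rw [hctdef]
    simp only [min_eq_left (by linarith : t₁ - s ≤ t₁), max_eq_right (by linarith : 0 ≤ t₁ - s)]
  set H : ℝ × ℝ → ℝ := fun p => - g (ct p.1) (cx p.2) with hHdef
  have hΦcont : Continuous (fun p : ℝ × ℝ => (ct p.1, cx p.2)) := by
    apply Continuous.prodMk
    · exact continuous_const.max ((continuous_const.sub continuous_fst).min continuous_const)
    · exact continuous_const.max ((continuous_snd.min continuous_const))
  have hΦmem : ∀ p : ℝ × ℝ, (ct p.1, cx p.2) ∈ ({t : ℝ | 0 ≤ t ∧ (t : EReal) < T} ×ˢ D) := by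
    intro p
    refine ⟨⟨(hctmem p.1).1, hTlt _ (hctmem p.1).2⟩, hIccD (hcxmem p.2)⟩
  have hHcont : Continuous H := by
    have : Continuous ((fun p : ℝ × ℝ => g p.1 p.2) ∘ (fun p : ℝ × ℝ => (ct p.1, cx p.2))) :=
      hg.comp_continuous hΦcont hΦmem
    exact this.neg
  -- the bound M
  have hK''sub : (Icc (0:ℝ) t₁ ×ˢ Icc k₁ c) ⊆ ({t : ℝ | 0 ≤ t ∧ (t : EReal) < T} ×ˢ D) := by
    rintro ⟨s, x⟩ ⟨hs, hx⟩
    exact ⟨⟨hs.1, hTlt _ hs.2⟩, hIccD hx⟩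
  obtain ⟨pM, hpMmem, hpM⟩ := ((isCompact_Icc (a := (0:ℝ)) (b := t₁)).prod
      (isCompact_Icc (a := k₁) (b := c))).exists_isMaxOn
    (⟨((0:ℝ), k₁), ⟨⟨le_rfl, ht₁0⟩, ⟨le_rfl, hk₁c⟩⟩⟩)
    (((hg.mono hK''sub)).abs)
  set M : ℝ := |g pM.1 pM.2| with hMdef
  have hM0 : 0 ≤ M := abs_nonneg _
  have hHbd : ∀ p, |H p| ≤ M := by
    intro p
    rw [hHdef]
    dsimp only
    rw [abs_neg]
    have hmemK : ((ct p.1, cx p.2)) ∈ Icc (0:ℝ) t₁ ×ˢ Icc k₁ c := ⟨hctmem p.1, hcxmem p.2⟩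
    exact hpM hmemK
  -- geometry of the (reversed) time interval
  set sb : ℝ := t₁ - t₀ with hsbdef
  have hsb0 : 0 < sb := by rw [hsbdef]; linarith
  have hsbt₁ : sb ≤ t₁ := by rw [hsbdef]; linarith
  set x₀ : ℝ := w t₁ with hx₀def
  -- the compact rectangle Q
  set lo : ℝ := min k₁ (x₀ - (M + 1) * t₁) - 1 with hlodef
  set hi : ℝ := max c (x₀ + (M + 1) * t₁) + 1 with hhidef
  have hMt₁ : 0 ≤ (M + 1) * t₁ := mul_nonneg (by linarith) ht₁0
  set Q : Set (ℝ × ℝ) := Icc (0:ℝ) t₁ ×ˢ Icc lo hi with hQdef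
  have hQcomp : IsCompact Q := (isCompact_Icc (a := (0:ℝ)) (b := t₁)).prod isCompact_Icc
  have hQne : Q.Nonempty := by
    refine ⟨((0:ℝ), x₀), ⟨⟨le_rfl, ht₁0⟩, ?_, ?_⟩⟩
    · rw [hlodef]
      have := min_le_right k₁ (x₀ - (M + 1) * t₁)
      linarith
    · rw [hhidef]
      have := le_max_right c (x₀ + (M + 1) * t₁)
      linarith
  set β : ℕ → ℝ := fun k => (1/4 : ℝ)^k with hβdef
  have hβpos : ∀ k, 0 < β k := fun k => pow_pos (by norm_num) k
  have hβle1 : ∀ k, β k ≤ 1 := by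
    intro k
    rw [hβdef]
    calc ((1:ℝ)/4)^k ≤ 1^k := pow_le_pow_left₀ (by norm_num) (by norm_num) k
      _ = 1 := one_pow k
  have happrox : ∀ k : ℕ, ∃ Gk : ℝ × ℝ → ℝ, (∃ Lk : NNReal, LipschitzWith Lk Gk) ∧
      (∀ p, |Gk p| ≤ M + 1) ∧ (∀ p ∈ Q, H p - 2 * β k ≤ Gk p ∧ Gk p ≤ H p - β k) := by
    intro k
    obtain ⟨Gk, h1, h2, h3⟩ := comparison_lipschitz_approx H Q hQcomp hHcont M hHbd hM0
      (β k) (hβpos k) hQne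
    exact ⟨Gk, h1, fun p => le_trans (h2 p) (by linarith [hβle1 k]), h3⟩
  choose G hGlip hGbd hGQ using happrox
  choose L hL using hGlip
  -- Picard–Lindelöf solutions of the approximating (reversed-time) equations
  have hsolex : ∀ k : ℕ, ∃ zk : ℝ → ℝ, zk 0 = x₀ ∧
      ∀ s ∈ Icc (0:ℝ) sb, HasDerivWithinAt zk (G k (s, zk s)) (Icc 0 sb) s := by
    intro k
    have hM1 : 0 ≤ M + 1 := by linarith
    have hpl : IsPicardLindelof (fun s x => G k (s, x)) (⟨0, le_rfl, hsb0.le⟩ : Icc (0:ℝ) sb) x₀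
        ⟨(M+1)*sb + 1, by positivity⟩ 0 ⟨M+1, hM1⟩ (L k) := by
      refine ⟨?_, ?_, ?_, ?_⟩
      · intro s _
        apply LipschitzWith.lipschitzOnWith
        apply LipschitzWith.of_dist_le_mul
        intro x y1
        have h := (hL k).dist_le_mul (s, x) (s, y1)
        rwa [Prod.dist_eq, dist_self, max_eq_right dist_nonneg] at h
      · intro x _
        exact ((hL k).continuous.comp (continuous_id.prodMk continuous_const)).continuousOn
      · intro s _ x _
        rw [Real.norm_eq_abs]; exact hGbd k (s, x)
      · show (M+1) * max (sb - 0) (0 - 0) ≤ ((M+1)*sb + 1) - 0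
        rw [sub_zero, sub_zero, sub_zero, max_eq_left hsb0.le]
        nlinarith
    obtain ⟨zf, hzf0, hzfd⟩ := hpl.exists_eq_forall_mem_Icc_hasDerivWithinAt₀
    exact ⟨zf, hzf0, fun s hs => hzfd s hs⟩
  choose z hz0 hzd using hsolex
  -- globally continuous clamped versions
  set y : ℕ → ℝ → ℝ := fun k σ => z k (max 0 (min σ sb)) with hydef
  have hclampmem : ∀ σ : ℝ, max 0 (min σ sb) ∈ Icc (0:ℝ) sb :=
    fun σ => ⟨le_max_left _ _, max_le hsb0.le (min_le_right _ _)⟩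
  have hyeq : ∀ k, ∀ σ ∈ Icc (0:ℝ) sb, y k σ = z k σ := by
    intro k σ hσ
    rw [hydef]; dsimp only; rw [min_eq_left hσ.2, max_eq_right hσ.1]
  have hy0 : ∀ k, y k 0 = x₀ := by
    intro k; rw [hyeq k 0 ⟨le_rfl, hsb0.le⟩, hz0]
  have hycont : ∀ k, Continuous (y k) := by
    intro k
    have hzc : ContinuousOn (z k) (Icc 0 sb) := fun s hs => (hzd k s hs).continuousWithinAt
    exact hzc.comp_continuous
      (continuous_const.max (continuous_id.min continuous_const)) hclampmem
  have hycont' : ∀ k, ContinuousOn (y k) (Icc 0 sb) := fun k => (hycont k).continuousOn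
  have hyd : ∀ k, ∀ σ ∈ Icc (0:ℝ) sb, HasDerivWithinAt (y k) (G k (σ, y k σ)) (Icc 0 sb) σ := by
    intro k σ hσ
    rw [hyeq k σ hσ]
    exact (hzd k σ hσ).congr (fun x hx => hyeq k x hx) (hyeq k σ hσ)
  have hydIci : ∀ k, ∀ σ ∈ Ico (0:ℝ) sb, HasDerivWithinAt (y k) (G k (σ, y k σ)) (Ici σ) σ :=
    fun k σ hσ => (hyd k σ ⟨hσ.1, hσ.2.le⟩).mono_of_mem_nhdsWithin (Icc_mem_nhdsGE_of_mem hσ)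
  have hydAt : ∀ k, ∀ σ ∈ Ioo (0:ℝ) sb, HasDerivAt (y k) (G k (σ, y k σ)) σ :=
    fun k σ hσ => (hyd k σ (Ioo_subset_Icc_self hσ)).hasDerivAt (Icc_mem_nhds hσ.1 hσ.2)
  have hGyc : ∀ k, Continuous (fun s => G k (s, y k s)) := fun k =>
    (hL k).continuous.comp (continuous_id.prodMk (hycont k))
  -- integral equation for the approximations
  have hyint : ∀ k, ∀ σ ∈ Icc (0:ℝ) sb, y k σ = x₀ + ∫ s in (0:ℝ)..σ, G k (s, y k s) := by
    intro k σ hσ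
    have hff := intervalIntegral.integral_eq_sub_of_hasDeriv_right_of_le hσ.1
      ((hycont k).continuousOn) (f' := fun s => G k (s, y k s))
      (fun x hx => ((hydAt k x ⟨hx.1, lt_of_lt_of_le hx.2 hσ.2⟩).hasDerivWithinAt))
      (((hGyc k).continuousOn).intervalIntegrable)
    rw [hff, hy0 k]; ring
  have hytraj : ∀ k, ∀ σ ∈ Icc (0:ℝ) sb, |y k σ - x₀| ≤ (M+1) * σ := by
    intro k σ hσ
    have h1 : y k σ - x₀ = ∫ s in (0:ℝ)..σ, G k (s, y k s) := by rw [hyint k σ hσ]; ring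
    rw [h1, ← Real.norm_eq_abs]
    have h2 := intervalIntegral.norm_integral_le_of_norm_le_const (C := M+1)
      (f := fun s => G k (s, y k s)) (a := 0) (b := σ)
      (fun x _ => by rw [Real.norm_eq_abs]; exact hGbd k _)
    calc ‖∫ s in (0:ℝ)..σ, G k (s, y k s)‖ ≤ (M+1) * |σ - 0| := h2
      _ = (M+1) * σ := by rw [sub_zero, abs_of_nonneg hσ.1]
  have hyQ : ∀ k, ∀ σ ∈ Icc (0:ℝ) sb, (σ, y k σ) ∈ Q := by
    intro k σ hσ
    have h2 := abs_le.1 (hytraj k σ hσ)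
    have hσt₁ : σ ≤ t₁ := le_trans hσ.2 hsbt₁
    have h3 : (M+1) * σ ≤ (M+1) * t₁ := by nlinarith
    refine ⟨⟨hσ.1, hσt₁⟩, ?_, ?_⟩
    · rw [hlodef]
      have := min_le_right k₁ (x₀ - (M + 1) * t₁)
      linarith [h2.1]
    · rw [hhidef]
      have := le_max_right c (x₀ + (M + 1) * t₁)
      linarith [h2.2]
  -- the reversed subsolution barrier
  set wt : ℝ → ℝ := fun σ => w (t₁ - σ) with hwtdef
  have hrefl : ∀ σ ∈ Icc (0:ℝ) sb, t₁ - σ ∈ Icc t₀ t₁ := by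
    intro σ hσ
    rw [hsbdef] at hσ
    exact ⟨by linarith [hσ.2], by linarith [hσ.1]⟩
  have hwtcont : ContinuousOn wt (Icc 0 sb) :=
    hwcont.comp ((continuous_const.sub continuous_id).continuousOn)
      (fun σ hσ => hJsub (hrefl σ hσ))
  have hnegd : ∀ τ : ℝ, HasDerivAt (fun s : ℝ => t₁ - s) (-1) τ := by
    intro τ
    simpa using (hasDerivAt_id' τ).const_sub t₁
  have hwtd : ∀ σ ∈ Ico (0:ℝ) sb, HasDerivAt wt (-(w' (t₁ - σ))) σ := by
    intro σ hσ
    have hτ : t₁ - σ ∈ Ico (0:ℝ) Tw := hwIco _ (hJsub (hrefl σ ⟨hσ.1, hσ.2.le⟩))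
    have h2 := (hw_sol _ hτ).2.1
    have h3 := h2.comp σ (hnegd σ)
    have h4 : w' (t₁ - σ) * (-1) = -(w' (t₁ - σ)) := by ring
    rw [h4] at h3
    exact h3
  -- Fence 1 : y k ≤ wt on [0, sb]
  have hfence1 : ∀ k, ∀ σ ∈ Icc (0:ℝ) sb, y k σ ≤ wt σ := by
    intro k
    have key : ∀ σ ∈ Ico (0:ℝ) sb, y k σ = wt σ → G k (σ, y k σ) < -(w' (t₁ - σ)) := by
      intro σ hσ heq
      have hτJ : t₁ - σ ∈ Icc t₀ t₁ := hrefl σ ⟨hσ.1, hσ.2.le⟩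
      have hτt₀ : t₀ < t₁ - σ := by
        rw [hsbdef] at hσ; linarith [hσ.2]
      have hw_gt := hgt (t₁ - σ) hτt₀ hτJ.2
      have hwτk₁ : k₁ ≤ w (t₁ - σ) := le_trans (huk₁ _ hτJ) hw_gt.le
      have hwτc : w (t₁ - σ) ≤ c := hwc _ hτJ
      have hwτD : w (t₁ - σ) ∈ D := hwmem _ hτJ
      have hQmem : (σ, w (t₁ - σ)) ∈ Q := by
        refine ⟨⟨hσ.1, le_trans hσ.2.le hsbt₁⟩, ?_, ?_⟩
        · rw [hlodef]; have := min_le_left k₁ (x₀ - (M + 1) * t₁); linarith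
        · rw [hhidef]; have := le_max_left c (x₀ + (M + 1) * t₁); linarith
      have heq2 : y k σ = w (t₁ - σ) := heq
      rw [heq2]
      have hG := (hGQ k (σ, w (t₁ - σ)) hQmem).2
      have hHeval : H (σ, w (t₁ - σ)) = - g (t₁ - σ) (w (t₁ - σ)) := by
        rw [hHdef]; dsimp only
        rw [hcteq σ hσ.1 (le_trans hσ.2.le hsbt₁), hcxeq _ hwτk₁ hwτc]
      have hfgτ : f (t₁ - σ) (w (t₁ - σ)) ≤ g (t₁ - σ) (w (t₁ - σ)) :=
        hfg _ _ _ (lt_of_le_of_lt ht₀0 hτt₀) (hTlt _ hτJ.2) hwτD hwτD le_rfl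
      have hw'le := (hw_sol _ (hwIco _ (hJsub hτJ))).2.2
      rw [hHeval] at hG
      have := hβpos k
      linarith
    exact fun σ hσ => image_le_of_deriv_right_lt_deriv_boundary' (hycont' k) (hydIci k)
      (le_of_eq (by rw [hy0 k, hwtdef, hx₀def]; norm_num)) hwtcont
      (fun σ hσ => (hwtd σ hσ).hasDerivWithinAt) key hσ
  -- Fence 2 : monotonicity in k
  have hmono : ∀ k, ∀ σ ∈ Icc (0:ℝ) sb, y k σ ≤ y (k+1) σ := by
    intro k
    have key : ∀ σ ∈ Ico (0:ℝ) sb, y k σ = y (k+1) σ →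
        G k (σ, y k σ) < G (k+1) (σ, y (k+1) σ) := by
      intro σ hσ heq
      have hQm := hyQ k σ ⟨hσ.1, hσ.2.le⟩
      have h1 := (hGQ k _ hQm).2
      have h2 := (hGQ (k+1) (σ, y k σ) hQm).1
      have hββ : 2 * β (k+1) < β k := by
        rw [hβdef]; dsimp only; rw [pow_succ]
        nlinarith [hβpos k]
      rw [← heq]
      have hβk := hβpos k
      rw [hβdef] at *
      linarith
    exact fun σ hσ => image_le_of_deriv_right_lt_deriv_boundary' (hycont' k) (hydIci k)
      (le_of_eq (by rw [hy0 k, hy0 (k+1)])) (hycont' (k+1)) (hydIci (k+1)) key hσ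
  -- the monotone limit Z
  set Z : ℝ → ℝ := fun σ => ⨆ k, y k σ with hZdef
  have hymono : ∀ σ ∈ Icc (0:ℝ) sb, Monotone (fun k => y k σ) :=
    fun σ hσ => monotone_nat_of_le_succ (fun k => hmono k σ hσ)
  have hybdd : ∀ σ ∈ Icc (0:ℝ) sb, BddAbove (Set.range (fun k => y k σ)) := by
    intro σ hσ
    refine ⟨wt σ, ?_⟩
    rintro v ⟨k, rfl⟩
    exact hfence1 k σ hσ
  have htend : ∀ σ ∈ Icc (0:ℝ) sb, Tendsto (fun k => y k σ) atTop (nhds (Z σ)) :=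
    fun σ hσ => tendsto_atTop_ciSup (hymono σ hσ) (hybdd σ hσ)
  have hZwt : ∀ σ ∈ Icc (0:ℝ) sb, Z σ ≤ wt σ := fun σ hσ => ciSup_le (fun k => hfence1 k σ hσ)
  have hZ0 : Z 0 = x₀ := by
    rw [hZdef]; dsimp only
    have hconst : (fun k : ℕ => y k 0) = fun _ : ℕ => x₀ := funext (fun k => hy0 k)
    rw [hconst, ciSup_const]
  have hZmeas : Measurable Z := Measurable.iSup (fun k => (hycont k).measurable)
  set φ : ℝ → ℝ := fun s => H (s, Z s) with hφdef
  have hφmeas : Measurable φ := hHcont.measurable.comp (measurable_id.prodMk hZmeas)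
  have hφbd : ∀ s, |φ s| ≤ M := fun s => hHbd _
  -- integral equation in the limit
  have hZint : ∀ σ ∈ Icc (0:ℝ) sb, Z σ = x₀ + ∫ s in (0:ℝ)..σ, φ s := by
    intro σ hσ
    have hIsub : Set.uIoc (0:ℝ) σ ⊆ Icc (0:ℝ) sb := by
      rw [Set.uIoc_of_le hσ.1]
      exact fun x hx => ⟨hx.1.le, le_trans hx.2 hσ.2⟩
    have htend2 : Tendsto (fun k => ∫ s in (0:ℝ)..σ, G k (s, y k s)) atTop
        (nhds (∫ s in (0:ℝ)..σ, φ s)) := by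
      apply intervalIntegral.tendsto_integral_filter_of_dominated_convergence
        (bound := fun _ => M + 1)
      · exact Filter.Eventually.of_forall (fun k => ((hGyc k).aestronglyMeasurable))
      · refine Filter.Eventually.of_forall (fun k => ?_)
        refine Filter.Eventually.of_forall (fun x => ?_)
        intro hx
        rw [Real.norm_eq_abs]
        exact hGbd k _
      · exact intervalIntegrable_const
      · refine Filter.Eventually.of_forall (fun x => ?_)
        intro hx
        have hxI : x ∈ Icc (0:ℝ) sb := hIsub hx
        have hHk : Tendsto (fun k => H (x, y k x)) atTop (nhds (H (x, Z x))) :=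
          (hHcont.tendsto (x, Z x)).comp
            (Filter.Tendsto.prodMk_nhds tendsto_const_nhds (htend x hxI))
        have hβ0 : Tendsto (fun k : ℕ => β k) atTop (nhds 0) := by
          rw [hβdef]
          exact tendsto_pow_atTop_nhds_zero_of_lt_one (by norm_num) (by norm_num)
        have hglow : Tendsto (fun k => H (x, y k x) - 2 * β k) atTop (nhds (H (x, Z x))) := by
          have h := hHk.sub (hβ0.const_mul 2)
          simpa using h
        have hghigh : Tendsto (fun k => H (x, y k x) - β k) atTop (nhds (H (x, Z x))) := by
          have h := hHk.sub hβ0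
          simpa using h
        refine tendsto_of_tendsto_of_tendsto_of_le_of_le' hglow hghigh ?_ ?_
        · exact Filter.Eventually.of_forall (fun k => (hGQ k _ (hyQ k x hxI)).1)
        · exact Filter.Eventually.of_forall (fun k => (hGQ k _ (hyQ k x hxI)).2)
    have h3 : Tendsto (fun k => y k σ) atTop (nhds (x₀ + ∫ s in (0:ℝ)..σ, φ s)) := by
      have hfe : (fun k => y k σ) = fun k => x₀ + ∫ s in (0:ℝ)..σ, G k (s, y k s) :=
        funext (fun k => hyint k σ hσ)
      rw [hfe]
      exact tendsto_const_nhds.add htend2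
    exact tendsto_nhds_unique (htend σ hσ) h3
  -- continuity and differentiability of Z
  have hφint : IntegrableOn φ (Icc (0:ℝ) sb) := by
    refine MeasureTheory.Integrable.mono' (g := fun _ => M)
      (integrableOn_const measure_Icc_lt_top.ne) hφmeas.aestronglyMeasurable ?_
    exact Filter.Eventually.of_forall (fun s => by rw [Real.norm_eq_abs]; exact hφbd s)
  have hprimcont : ContinuousOn (fun σ => ∫ s in (0:ℝ)..σ, φ s) (Icc 0 sb) := by
    have h := intervalIntegral.continuousOn_primitive_interval (a := (0:ℝ)) (b := sb) (f := φ)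
      (by rwa [Set.uIcc_of_le hsb0.le])
    rwa [Set.uIcc_of_le hsb0.le] at h
  have hZcont : ContinuousOn Z (Icc 0 sb) :=
    (continuousOn_const.add hprimcont).congr (fun σ hσ => hZint σ hσ)
  have hφcont : ContinuousOn φ (Icc 0 sb) :=
    hHcont.comp_continuousOn (continuousOn_id.prodMk hZcont)
  have hφii : ∀ σ ∈ Icc (0:ℝ) sb, IntervalIntegrable φ volume 0 σ := by
    intro σ hσ
    apply ContinuousOn.intervalIntegrable
    rw [Set.uIcc_of_le hσ.1]
    exact hφcont.mono (Icc_subset_Icc le_rfl hσ.2)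
  have hZderiv0 : ∀ σ ∈ Ioo (0:ℝ) sb, HasDerivAt Z (φ σ) σ := by
    intro σ hσ
    have hca : ContinuousAt φ σ :=
      (hφcont σ (Ioo_subset_Icc_self hσ)).continuousAt (Icc_mem_nhds hσ.1 hσ.2)
    have hd := intervalIntegral.integral_hasDerivAt_right (hφii σ (Ioo_subset_Icc_self hσ))
      ⟨univ, univ_mem, hφmeas.aestronglyMeasurable⟩ hca
    have hd2 := hd.const_add x₀
    have heqe : (fun σ' => x₀ + ∫ s in (0:ℝ)..σ', φ s) =ᶠ[nhds σ] Z :=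
      Filter.eventuallyEq_of_mem (Icc_mem_nhds hσ.1 hσ.2) (fun x hx => (hZint x hx).symm)
    exact (Filter.EventuallyEq.hasDerivAt_iff heqe).1 hd2
  have hZderivL : ∀ σ ∈ Ioc (0:ℝ) sb, HasDerivWithinAt Z (φ σ) (Icc 0 σ) σ := by
    intro σ hσ
    have hmem : Icc (0:ℝ) sb ∈ nhdsWithin σ (Iic σ) := by
      refine mem_nhdsWithin.2 ⟨Ioi 0, isOpen_Ioi, hσ.1, ?_⟩
      rintro x ⟨hx1, hx2⟩
      exact ⟨le_of_lt hx1, le_trans hx2 hσ.2⟩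
    have hcwa : ContinuousWithinAt φ (Iic σ) σ :=
      (hφcont σ ⟨hσ.1.le, hσ.2⟩).mono_of_mem_nhdsWithin hmem
    have hd := intervalIntegral.integral_hasDerivWithinAt_right (s := Iic σ) (t := Iic σ) (hφii σ ⟨hσ.1.le, hσ.2⟩)
      ⟨univ, univ_mem, hφmeas.aestronglyMeasurable⟩ hcwa
    have hd2 := (hd.const_add x₀).mono (Icc_subset_Iic_self (a := (0:ℝ)) (b := σ))
    exact hd2.congr (fun x hx => (hZint x ⟨hx.1, le_trans hx.2 hσ.2⟩))
      (hZint σ ⟨hσ.1.le, hσ.2⟩)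
  -- the forward-time solution candidate ζ
  set ζ : ℝ → ℝ := fun τ => Z (t₁ - τ) with hζdef
  have hrefl2 : ∀ τ ∈ Icc t₀ t₁, t₁ - τ ∈ Icc (0:ℝ) sb := by
    intro τ hτ
    rw [hsbdef]
    exact ⟨by linarith [hτ.2], by linarith [hτ.1]⟩
  have hζcont : ContinuousOn ζ (Icc t₀ t₁) :=
    hZcont.comp ((continuous_const.sub continuous_id).continuousOn) (fun τ hτ => hrefl2 τ hτ)
  have hζw : ∀ τ ∈ Icc t₀ t₁, ζ τ ≤ w τ := by
    intro τ hτ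
    have h := hZwt (t₁ - τ) (hrefl2 τ hτ)
    have h3 : wt (t₁ - τ) = w τ := congrArg w (by ring)
    rw [h3] at h
    exact h
  have hζt₁ : ζ t₁ = w t₁ := by
    have : ζ t₁ = Z 0 := congrArg Z (by ring)
    rw [this, hZ0, hx₀def]
  -- the last crossing point of ζ and u
  set S₂ : Set ℝ := {τ ∈ Icc t₀ t₁ | ζ τ ≤ u τ} with hS₂def
  have hS₂cl : IsClosed S₂ := by
    have hrw : S₂ = Icc t₀ t₁ ∩ (fun τ => ζ τ - u τ) ⁻¹' (Iic 0) := by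
      ext x; simp [hS₂def, sub_nonpos, and_comm]
    rw [hrw]
    exact ContinuousOn.preimage_isClosed_of_isClosed
      (hζcont.sub (hucont.mono hJsub)) isClosed_Icc isClosed_Iic
  have ht₀S₂ : t₀ ∈ S₂ := ⟨⟨le_rfl, ht₀t₁.le⟩, le_trans (hζw t₀ ⟨le_rfl, ht₀t₁.le⟩) hwu₀⟩
  have hS₂bdd : BddAbove S₂ := ⟨t₁, fun x hx => hx.1.2⟩
  set τh : ℝ := sSup S₂ with hτhdef
  have hτhS₂ : τh ∈ S₂ := hS₂cl.csSup_mem ⟨t₀, ht₀S₂⟩ hS₂bdd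
  have hτhJ : τh ∈ Icc t₀ t₁ := hτhS₂.1
  have hτht₁ : τh < t₁ := by
    rcases lt_or_eq_of_le hτhJ.2 with h | h
    · exact h
    · exfalso
      have h2 := hτhS₂.2
      rw [h, hζt₁] at h2
      exact absurd h2 (not_le.2 hcon)
  have hτh0 : 0 ≤ τh := le_trans ht₀0 hτhJ.1
  have hζgt : ∀ τ : ℝ, τh < τ → τ ≤ t₁ → u τ < ζ τ := by
    intro τ h1 h2
    by_contra hc
    push_neg at hc
    exact absurd (le_csSup hS₂bdd ⟨⟨le_trans hτhJ.1 h1.le, h2⟩, hc⟩) (not_le.2 h1)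
  have hζτh : ζ τh = u τh := by
    refine le_antisymm hτhS₂.2 ?_
    have hmemι : Icc t₀ t₁ ∈ nhdsWithin τh (Ioi τh) := by
      refine mem_nhdsWithin.2 ⟨Iio t₁, isOpen_Iio, hτht₁, ?_⟩
      rintro x ⟨hx1, hx2⟩
      exact ⟨le_trans hτhJ.1 (le_of_lt hx2), le_of_lt hx1⟩
    have hcz : ContinuousWithinAt ζ (Ioi τh) τh :=
      (hζcont τh hτhJ).mono_of_mem_nhdsWithin hmemι
    have hcu : ContinuousWithinAt u (Ioi τh) τh :=
      ((hu_sol τh (huIco τh (hJsub hτhJ))).2.differentiableAt.continuousAt).continuousWithinAt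
    have hev : ∀ᶠ τ in nhdsWithin τh (Ioi τh), 0 ≤ ζ τ - u τ := by
      filter_upwards [self_mem_nhdsWithin,
        mem_nhdsWithin_of_mem_nhds (Iio_mem_nhds hτht₁)] with τ h1 h2
      have h3 := hζgt τ h1 (le_of_lt h2)
      linarith
    have h4 := ge_of_tendsto (hcz.sub hcu) hev
    change 0 ≤ ζ τh - u τh at h4
    linarith
  -- window facts on [τh, t₁]
  have hwin : ∀ τ ∈ Icc τh t₁, u τ ≤ ζ τ ∧ ζ τ ≤ w τ ∧ k₁ ≤ ζ τ ∧ ζ τ ≤ c ∧ ζ τ ∈ D := by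
    intro τ hτ
    have hτJ : τ ∈ Icc t₀ t₁ := ⟨le_trans hτhJ.1 hτ.1, hτ.2⟩
    have h1 : u τ ≤ ζ τ := by
      rcases eq_or_lt_of_le hτ.1 with h | h
      · rw [← h, hζτh]
      · exact (hζgt τ h hτ.2).le
    have h2 : ζ τ ≤ w τ := hζw τ hτJ
    have h3 : k₁ ≤ ζ τ := le_trans (huk₁ τ hτJ) h1
    have h4 : ζ τ ≤ c := le_trans h2 (hwc τ hτJ)
    exact ⟨h1, h2, h3, h4, hIccD ⟨h3, h4⟩⟩
  have hHeval : ∀ τ ∈ Icc τh t₁, φ (t₁ - τ) = - g τ (ζ τ) := by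
    intro τ hτ
    obtain ⟨h1, h2, h3, h4, h5⟩ := hwin τ hτ
    have hτJ : τ ∈ Icc t₀ t₁ := ⟨le_trans hτhJ.1 hτ.1, hτ.2⟩
    have hσmem : t₁ - τ ∈ Icc (0:ℝ) sb := hrefl2 τ hτJ
    have e1 : ct (t₁ - τ) = τ := by
      rw [hcteq _ hσmem.1 (le_trans hσmem.2 hsbt₁)]; ring
    show - g (ct (t₁ - τ)) (cx (Z (t₁ - τ))) = - g τ (ζ τ)
    rw [e1, show Z (t₁ - τ) = ζ τ from rfl, hcxeq _ h3 h4]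
  -- derivative of ζ in the interior
  have hζd : ∀ τ ∈ Ioo τh t₁, HasDerivAt ζ (g τ (ζ τ)) τ := by
    intro τ hτ
    have hσIoo : t₁ - τ ∈ Ioo (0:ℝ) sb := by
      rw [hsbdef]
      constructor
      · linarith [hτ.2]
      · have h5 : t₀ ≤ τh := hτhJ.1
        have h6 : τh < τ := hτ.1
        linarith
    have hZd := hZderiv0 (t₁ - τ) hσIoo
    have hcomp := hZd.comp τ (hnegd τ)
    have heval2 : φ (t₁ - τ) * (-1) = g τ (ζ τ) := by
      rw [hHeval τ ⟨hτ.1.le, hτ.2.le⟩]; ring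
    rw [heval2] at hcomp
    exact hcomp
  -- right derivative of ζ at τh
  have hσh : t₁ - τh ∈ Ioc (0:ℝ) sb := by
    rw [hsbdef]
    exact ⟨by linarith, by linarith [hτhJ.1]⟩
  have hζdτh : HasDerivWithinAt ζ (g τh (ζ τh)) (Ici τh) τh := by
    have houter := hZderivL (t₁ - τh) hσh
    have hinner : HasDerivWithinAt (fun s : ℝ => t₁ - s) (-1) (Icc τh t₁) τh :=
      (hnegd τh).hasDerivWithinAt
    have hmaps : MapsTo (fun s : ℝ => t₁ - s) (Icc τh t₁) (Icc 0 (t₁ - τh)) := by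
      intro x hx
      simp only [mem_Icc] at hx ⊢
      constructor
      · linarith [hx.2]
      · linarith [hx.1]
    have hcomp := houter.comp τh hinner hmaps
    have heval3 : φ (t₁ - τh) * (-1) = g τh (ζ τh) := by
      rw [hHeval τh ⟨le_rfl, hτhJ.2⟩]; ring
    rw [heval3] at hcomp
    exact hcomp.mono_of_mem_nhdsWithin (Icc_mem_nhdsGE_of_mem ⟨le_rfl, hτht₁⟩)
  -- the glued function
  set Fg : ℝ → ℝ := fun t => if t ≤ τh then u t else ζ t with hFgdef
  have hFg0 : Fg 0 = u0 := by
    rw [hFgdef]; dsimp only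
    rw [if_pos hτh0]
    exact hu_init
  have hFgsol : ∀ t ∈ Ico (0:ℝ) t₁, Fg t ∈ D ∧ HasDerivAt Fg (g t (Fg t)) t := by
    intro t ht
    rcases lt_trichotomy t τh with hlt | heqt | hgt2
    · have hFeq : Fg =ᶠ[nhds t] u := by
        refine Filter.eventuallyEq_of_mem (Iio_mem_nhds hlt) ?_
        intro x hx
        rw [hFgdef]; dsimp only; rw [if_pos (le_of_lt hx)]
      have hFt : Fg t = u t := by rw [hFgdef]; dsimp only; rw [if_pos hlt.le]
      have hud := (hu_sol t ⟨ht.1, lt_trans ht.2 ht₁u⟩).2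
      refine ⟨hFt ▸ (hu_sol t ⟨ht.1, lt_trans ht.2 ht₁u⟩).1, ?_⟩
      rw [hFt]
      exact (Filter.EventuallyEq.hasDerivAt_iff hFeq).2 hud
    · have hle : t ≤ τh := le_of_eq heqt
      have huτmem := hu_sol t ⟨ht.1, lt_trans ht.2 ht₁u⟩
      have hζt : ζ t = u t := by rw [heqt]; exact hζτh
      have hFτ : Fg t = u t := by rw [hFgdef]; dsimp only; rw [if_pos hle]
      have hl : HasDerivWithinAt Fg (g t (u t)) (Iic t) t :=
        (huτmem.2.hasDerivWithinAt).congr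
          (fun x hx => by
            rw [hFgdef]; dsimp only; rw [if_pos (le_trans (mem_Iic.mp hx) hle)]) hFτ
      have hr : HasDerivWithinAt Fg (g t (u t)) (Ici t) t := by
        have h2 := hζdτh
        rw [← heqt] at h2
        rw [hζt] at h2
        refine h2.congr ?_ (by rw [hFτ, hζt])
        intro x hx
        rcases eq_or_lt_of_le (mem_Ici.mp hx) with h | h
        · rw [hFgdef]; dsimp only
          rw [← h, if_pos hle, hζt]
        · have hx2 : τh < x := by rw [← heqt]; exact h
          rw [hFgdef]; dsimp only; rw [if_neg (not_le.2 hx2)]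
      have hder : HasDerivAt Fg (g t (u t)) t := by
        have hu2 := hl.union hr
        rw [Iic_union_Ici] at hu2
        exact hasDerivWithinAt_univ.1 hu2
      rw [hFτ]
      exact ⟨huτmem.1, hder⟩
    · have hFeq : Fg =ᶠ[nhds t] ζ := by
        refine Filter.eventuallyEq_of_mem (Ioi_mem_nhds hgt2) ?_
        intro x hx
        rw [hFgdef]; dsimp only; rw [if_neg (not_le.2 hx)]
      have hFt : Fg t = ζ t := by rw [hFgdef]; dsimp only; rw [if_neg (not_le.2 hgt2)]
      have hd := hζd t ⟨hgt2, ht.2⟩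
      obtain ⟨h1, h2, h3, h4, h5⟩ := hwin t ⟨hgt2.le, ht.2.le⟩
      refine ⟨hFt ▸ h5, ?_⟩
      rw [hFt]
      exact (Filter.EventuallyEq.hasDerivAt_iff hFeq).2 hd
  -- the contradiction
  have huniq := hu_uniq Fg t₁ (le_of_lt ht₁u) hFg0 hFgsol
  set tm : ℝ := (τh + t₁)/2 with htmdef
  have htm1 : τh < tm := by rw [htmdef]; linarith
  have htm2 : tm < t₁ := by rw [htmdef]; linarith
  have htmIco : tm ∈ Ico (0:ℝ) t₁ := ⟨by linarith, htm2⟩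
  have hEq := huniq tm htmIco
  have hFtm : Fg tm = ζ tm := by rw [hFgdef]; dsimp only; rw [if_neg (not_le.2 htm1)]
  have hlt2 := hζgt tm htm1 htm2.le
  rw [hFtm] at hEq
  rw [hEq] at hlt2
  exact lt_irrefl _ hlt2
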